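/- Let μ be a finite non-atomic Borel measure on [0,1], let F, G ∈ L²(μ), and let f, g : [0,1] → ℝ satisfy f(x) = f(0) + ∫_{[0,x]} F dμ and g(x) = g(0) + ∫_{[0,x]} G dμ for all x ∈ [0,1]. Then for every x ∈ [0,1], f(x)g(x) − f(0)g(0) = ∫_{[0,x]} (f·G + g·F) dμ; in particular the product fg is a μ-primitive of f·G + g·F (Leibniz rule for ∇_μ), and f(1)g(1) − f(0)g(0) = ∫_{[0,1]} f G dμ + ∫_{[0,1]} g F dμ. -/

import Mathlib

open MeasureTheory

private lemma primitive_sm (ν : Measure ℝ) [IsFiniteMeasure ν] {F : ℝ → ℝ}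
    (hF : Integrable F ν) :
    StronglyMeasurable (fun t => ∫ s in Set.Iic t, F s ∂ν) := by
  obtain ⟨F₀, hF₀m, hF₀⟩ := hF.1
  have h1 : ∀ t, ∫ s in Set.Iic t, F s ∂ν = ∫ s in Set.Iic t, F₀ s ∂ν := fun t =>
    integral_congr_ae (ae_restrict_of_ae hF₀)
  have h2 : ∀ t, ∫ s in Set.Iic t, F₀ s ∂ν
      = ∫ s, ({p : ℝ × ℝ | p.2 ≤ p.1}.indicator (fun p => F₀ p.2)) (t, s) ∂ν := by
    intro t
    rw [← integral_indicator measurableSet_Iic]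
    refine integral_congr_ae (Filter.Eventually.of_forall fun s => ?_)
    by_cases h : s ≤ t <;> simp [Set.indicator_apply, h]
  simp_rw [h1, h2]
  exact StronglyMeasurable.integral_prod_right'
    (((hF₀m.measurable.comp measurable_snd).indicator
      (measurableSet_le measurable_snd measurable_fst)).stronglyMeasurable)

private lemma parts_key (ν : Measure ℝ) [IsFiniteMeasure ν] [NullSingletonClass ν] {F G : ℝ → ℝ}
    (hF : Integrable F ν) (hG : Integrable G ν) :
    (∫ s, F s ∂ν) * (∫ t, G t ∂ν)
      = (∫ t, (∫ s in Set.Iic t, F s ∂ν) * G t ∂ν)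
        + ∫ s, F s * (∫ t in Set.Iic s, G t ∂ν) ∂ν := by
  set H : ℝ × ℝ → ℝ := fun p => F p.1 * G p.2 with hHdef
  have hS : MeasurableSet {p : ℝ × ℝ | p.1 ≤ p.2} :=
    measurableSet_le measurable_fst measurable_snd
  have hH : Integrable H (ν.prod ν) := hF.mul_prod hG
  have htotal : ∫ p, H p ∂(ν.prod ν) = (∫ s, F s ∂ν) * (∫ t, G t ∂ν) :=
    integral_prod_mul F G
  have hsplit := integral_add_compl hS hH
  have hA : ∫ p in {p : ℝ × ℝ | p.1 ≤ p.2}, H p ∂(ν.prod ν)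
      = ∫ t, (∫ s in Set.Iic t, F s ∂ν) * G t ∂ν := by
    rw [← integral_indicator hS, integral_prod_symm _ (hH.indicator hS)]
    refine integral_congr_ae (Filter.Eventually.of_forall fun t => ?_)
    dsimp only
    rw [← integral_mul_const, ← integral_indicator measurableSet_Iic]
    refine integral_congr_ae (Filter.Eventually.of_forall fun s => ?_)
    by_cases h : s ≤ t <;> simp [hHdef, Set.indicator_apply, h]
  have hB : ∫ p in {p : ℝ × ℝ | p.1 ≤ p.2}ᶜ, H p ∂(ν.prod ν)
      = ∫ s, F s * (∫ t in Set.Iic s, G t ∂ν) ∂ν := by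
    rw [← integral_indicator hS.compl, integral_prod _ (hH.indicator hS.compl)]
    refine integral_congr_ae (Filter.Eventually.of_forall fun s => ?_)
    dsimp only
    rw [← setIntegral_congr_set Iio_ae_eq_Iic, ← integral_const_mul,
      ← integral_indicator measurableSet_Iio]
    refine integral_congr_ae (Filter.Eventually.of_forall fun t => ?_)
    by_cases h : t < s <;>
      simp [hHdef, Set.indicator_apply, h, not_le.mpr, le_of_not_gt]
  linarith [hsplit.trans htotal, hA, hB]

/-- Leibniz rule and integration by parts for `∇_μ`: if `μ` is a finite non-atomic Borel
measure on `[0,1]`, `F, G ∈ L²(μ)`, and `f, g` are `μ`-primitives of `F`, `G`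
respectively, then `fg` is a `μ`-primitive of `f·G + g·F`, and
`f(1)g(1) − f(0)g(0) = ∫ f G dμ + ∫ g F dμ`. -/
theorem stmt2 (μ : Measure ℝ) [IsFiniteMeasure μ] [NullSingletonClass μ]
    (hsupp : μ (Set.Icc (0:ℝ) 1)ᶜ = 0)
    (F G : ℝ → ℝ) (hF : MemLp F 2 μ) (hG : MemLp G 2 μ) (f g : ℝ → ℝ)
    (hf : ∀ x ∈ Set.Icc (0:ℝ) 1, f x = f 0 + ∫ t in Set.Icc 0 x, F t ∂μ)
    (hg : ∀ x ∈ Set.Icc (0:ℝ) 1, g x = g 0 + ∫ t in Set.Icc 0 x, G t ∂μ) :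
    (∀ x ∈ Set.Icc (0:ℝ) 1,
        f x * g x - f 0 * g 0 = ∫ t in Set.Icc 0 x, (f t * G t + g t * F t) ∂μ) ∧
      f 1 * g 1 - f 0 * g 0 =
        (∫ t in Set.Icc (0:ℝ) 1, f t * G t ∂μ) + ∫ t in Set.Icc (0:ℝ) 1, g t * F t ∂μ := by
  have hF1 : Integrable F μ := hF.integrable one_le_two
  have hG1 : Integrable G μ := hG.integrable one_le_two
  set A : ℝ → ℝ := fun t => ∫ s in Set.Icc 0 t, F s ∂μ with hAdef
  set B : ℝ → ℝ := fun t => ∫ s in Set.Icc 0 t, G s ∂μ with hBdef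
  -- strong measurability of A and B
  have hIicIci : ∀ (H : ℝ → ℝ) (t : ℝ),
      (∫ s in Set.Icc 0 t, H s ∂μ) = ∫ s in Set.Iic t, H s ∂(μ.restrict (Set.Ici 0)) := by
    intro H t
    rw [Measure.restrict_restrict measurableSet_Iic, Set.inter_comm, Set.Ici_inter_Iic]
  have hAsm : StronglyMeasurable A := by
    have : A = fun t => ∫ s in Set.Iic t, F s ∂(μ.restrict (Set.Ici 0)) := by
      funext t; exact hIicIci F t
    rw [this]; exact primitive_sm _ hF1.restrict
  have hBsm : StronglyMeasurable B := by
    have : B = fun t => ∫ s in Set.Iic t, G s ∂(μ.restrict (Set.Ici 0)) := by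
      funext t; exact hIicIci G t
    rw [this]; exact primitive_sm _ hG1.restrict
  -- bounds
  have hbd : ∀ (H : ℝ → ℝ), Integrable H μ → ∀ t, ‖∫ s in Set.Icc 0 t, H s ∂μ‖ ≤
      ∫ s, ‖H s‖ ∂μ := by
    intro H hH t
    calc ‖∫ s in Set.Icc 0 t, H s ∂μ‖ ≤ ∫ s in Set.Icc 0 t, ‖H s‖ ∂μ :=
          norm_integral_le_integral_norm _
      _ ≤ ∫ s, ‖H s‖ ∂μ := integral_mono_measure Measure.restrict_le_self
          (Filter.Eventually.of_forall fun s => norm_nonneg _) hH.norm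
  -- integrability of products
  have hAG : ∀ x : ℝ, Integrable (fun t => A t * G t) (μ.restrict (Set.Icc 0 x)) := fun x =>
    Integrable.bdd_mul hG1.restrict hAsm.aestronglyMeasurable (Filter.Eventually.of_forall (hbd F hF1))
  have hBF : ∀ x : ℝ, Integrable (fun t => B t * F t) (μ.restrict (Set.Icc 0 x)) := fun x =>
    Integrable.bdd_mul hF1.restrict hBsm.aestronglyMeasurable (Filter.Eventually.of_forall (hbd G hG1))
  -- key facts for each x ∈ [0,1]
  have key3 : ∀ x ∈ Set.Icc (0:ℝ) 1,
      Integrable (fun t => f t * G t) (μ.restrict (Set.Icc 0 x)) ∧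
      Integrable (fun t => g t * F t) (μ.restrict (Set.Icc 0 x)) ∧
      (∫ t in Set.Icc 0 x, f t * G t ∂μ)
        = f 0 * B x + ∫ t in Set.Icc 0 x, A t * G t ∂μ ∧
      (∫ t in Set.Icc 0 x, g t * F t ∂μ)
        = g 0 * A x + ∫ t in Set.Icc 0 x, B t * F t ∂μ := by
    intro x hx
    have hsub : ∀ t ∈ Set.Icc (0:ℝ) x, t ∈ Set.Icc (0:ℝ) 1 := fun t ht =>
      ⟨ht.1, ht.2.trans hx.2⟩
    have hfeq : ∀ t ∈ Set.Icc (0:ℝ) x, f t = f 0 + A t := fun t ht => hf t (hsub t ht)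
    have hgeq : ∀ t ∈ Set.Icc (0:ℝ) x, g t = g 0 + B t := fun t ht => hg t (hsub t ht)
    have i1 : Integrable (fun t => (f 0 + A t) * G t) (μ.restrict (Set.Icc 0 x)) := by
      have := ((hG1.restrict (s := Set.Icc 0 x)).const_mul (f 0)).add (hAG x)
      refine this.congr (Filter.Eventually.of_forall fun t => ?_)
      simp only [Pi.add_apply]; ring
    have i2 : Integrable (fun t => (g 0 + B t) * F t) (μ.restrict (Set.Icc 0 x)) := by
      have := ((hF1.restrict (s := Set.Icc 0 x)).const_mul (g 0)).add (hBF x)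
      refine this.congr (Filter.Eventually.of_forall fun t => ?_)
      simp only [Pi.add_apply]; ring
    have ae1 : (fun t => (f 0 + A t) * G t)
        =ᵐ[μ.restrict (Set.Icc 0 x)] fun t => f t * G t := by
      refine (ae_restrict_iff' measurableSet_Icc).2
        (Filter.Eventually.of_forall fun t ht => ?_)
      dsimp only
      rw [hfeq t ht]
    have ae2 : (fun t => (g 0 + B t) * F t)
        =ᵐ[μ.restrict (Set.Icc 0 x)] fun t => g t * F t := by
      refine (ae_restrict_iff' measurableSet_Icc).2
        (Filter.Eventually.of_forall fun t ht => ?_)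
      dsimp only
      rw [hgeq t ht]
    refine ⟨i1.congr ae1, i2.congr ae2, ?_, ?_⟩
    · rw [← integral_congr_ae ae1,
        show (fun t => (f 0 + A t) * G t) = fun t => f 0 * G t + A t * G t from
          funext fun t => by ring]
      rw [integral_add ((hG1.restrict (s := Set.Icc 0 x)).const_mul (f 0)) (hAG x),
        integral_const_mul]
    · rw [← integral_congr_ae ae2,
        show (fun t => (g 0 + B t) * F t) = fun t => g 0 * F t + B t * F t from
          funext fun t => by ring]
      rw [integral_add ((hF1.restrict (s := Set.Icc 0 x)).const_mul (g 0)) (hBF x),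
        integral_const_mul]
  -- the product rule via Fubini
  have hkey : ∀ x ∈ Set.Icc (0:ℝ) 1, A x * B x
      = (∫ t in Set.Icc 0 x, A t * G t ∂μ) + ∫ t in Set.Icc 0 x, B t * F t ∂μ := by
    intro x hx
    have h := parts_key (μ.restrict (Set.Icc 0 x)) hF1.restrict hG1.restrict
    have hinner : ∀ (H : ℝ → ℝ), ∀ t ∈ Set.Icc (0:ℝ) x,
        (∫ s in Set.Iic t, H s ∂(μ.restrict (Set.Icc 0 x)))
          = ∫ s in Set.Icc 0 t, H s ∂μ := by
      intro H t ht
      rw [Measure.restrict_restrict measurableSet_Iic]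
      have hset : Set.Iic t ∩ Set.Icc 0 x = Set.Icc 0 t := by
        ext s
        simp only [Set.mem_inter_iff, Set.mem_Iic, Set.mem_Icc]
        exact ⟨fun ⟨h1, h2, _⟩ => ⟨h2, h1⟩, fun ⟨h1, h2⟩ => ⟨h2, h1, h2.trans ht.2⟩⟩
      rw [hset]
    have e1 : (∫ t, (∫ s in Set.Iic t, F s ∂(μ.restrict (Set.Icc 0 x)))
          * G t ∂(μ.restrict (Set.Icc 0 x)))
        = ∫ t in Set.Icc 0 x, A t * G t ∂μ := by
      refine setIntegral_congr_fun measurableSet_Icc fun t ht => ?_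
      rw [hinner F t ht]
    have e2 : (∫ s, F s * (∫ t in Set.Iic s, G t ∂(μ.restrict (Set.Icc 0 x)))
          ∂(μ.restrict (Set.Icc 0 x)))
        = ∫ t in Set.Icc 0 x, B t * F t ∂μ := by
      refine setIntegral_congr_fun measurableSet_Icc fun t ht => ?_
      rw [hinner G t ht, mul_comm]
    rw [e1, e2] at h
    exact h
  have main : ∀ x ∈ Set.Icc (0:ℝ) 1,
      f x * g x - f 0 * g 0 = ∫ t in Set.Icc 0 x, (f t * G t + g t * F t) ∂μ := by
    intro x hx
    obtain ⟨ifG, igF, e1, e2⟩ := key3 x hx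
    rw [integral_add ifG igF, e1, e2, hf x hx, hg x hx]
    have hk := hkey x hx
    have hfx : (∫ t in Set.Icc 0 x, F t ∂μ) = A x := rfl
    have hgx : (∫ t in Set.Icc 0 x, G t ∂μ) = B x := rfl
    rw [hfx, hgx]
    linear_combination hk
  have h1mem : (1:ℝ) ∈ Set.Icc (0:ℝ) 1 := ⟨zero_le_one, le_refl 1⟩
  refine ⟨main, ?_⟩
  obtain ⟨ifG, igF, _, _⟩ := key3 1 h1mem
  rw [main 1 h1mem, integral_add ifG igF]
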